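/- The characteristic polynomial of the n x n matrix J_n over F_2 (with 1's directly above and below the diagonal and 0's elsewhere) is the mod-2 Chebyshev polynomial Q_n, and moreover the minimal polynomial of J_n equals its characteristic polynomial; equivalently, the map k[X]/(Q_n) -> k^n sending X^i to J_n^i(e_1) is an isomorphism of k-vector spaces for any field k of characteristic 2. -/

import Mathlib

open Polynomial Matrix

/-- auxiliary "extended standard basis": `auxE k n i` is the `i`-th standard basis
vector of `k^n` if `i < n`, and `0` otherwise. -/
noncomputable def auxE (k : Type*) [Field k] (n : ℕ) (i : ℕ) : Fin n → k :=
  if h : i < n then Pi.single (⟨i, h⟩ : Fin n) 1 else 0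

lemma auxE_apply (k : Type*) [Field k] (n i : ℕ) (r : Fin n) :
    auxE k n i r = if (r : ℕ) = i then 1 else 0 := by
  unfold auxE
  by_cases h : i < n
  · rw [dif_pos h, Pi.single_apply]
    simp [Fin.ext_iff]
  · rw [dif_neg h]
    have : (r : ℕ) ≠ i := by have := r.2; omega
    simp [this]

lemma aux_monic (k : Type*) [Field k] (Q : ℕ → Polynomial k)
    (h0 : Q 0 = 1) (h1 : Q 1 = Polynomial.X)
    (hrec : ∀ i, Q (i + 2) = Polynomial.X * Q (i + 1) + Q i) :
    ∀ i, (Q i).Monic ∧ (Q i).natDegree = i := by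
  have key : ∀ i, ((Q i).Monic ∧ (Q i).natDegree = i) ∧
      ((Q (i+1)).Monic ∧ (Q (i+1)).natDegree = i+1) := by
    intro i
    induction i with
    | zero =>
      refine ⟨⟨by simp [h0], by simp [h0]⟩, ⟨by simp [h1], by simp [h1]⟩⟩
    | succ m ih =>
      obtain ⟨⟨hm, hdm⟩, ⟨hm1, hdm1⟩⟩ := ih
      refine ⟨⟨hm1, hdm1⟩, ?_⟩
      have hXm : (X * Q (m+1)).Monic := (monic_X.mul hm1)
      have hXdeg : (X * Q (m+1)).natDegree = m + 2 := by
        rw [natDegree_mul (X_ne_zero) hm1.ne_zero, natDegree_X, hdm1]; omega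
      have hdlt : (Q m).degree < (X * Q (m+1)).degree := by
        rw [degree_eq_natDegree hXm.ne_zero, hXdeg]
        calc (Q m).degree ≤ (Q m).natDegree := degree_le_natDegree
          _ < ((m+2 : ℕ) : WithBot ℕ) := by
              rw [hdm]; exact_mod_cast Nat.lt_succ_of_lt (Nat.lt_succ_self m)
      constructor
      · rw [hrec m]
        exact hXm.add_of_left hdlt
      · rw [hrec m, natDegree_add_eq_left_of_degree_lt hdlt, hXdeg]
  exact fun i => (key i).1

lemma aux_span (k : Type*) [Field k] (Q : ℕ → Polynomial k)
    (hQ : ∀ i, (Q i).Monic ∧ (Q i).natDegree = i) (n : ℕ) :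
    ∀ d, d < n → ∀ p : Polynomial k, p.natDegree ≤ d →
      ∃ c : Fin n → k, p = ∑ i : Fin n, c i • Q (i : ℕ) := by
  intro d
  induction d using Nat.strong_induction_on with
  | _ d ih =>
    intro hdn p hpd
    by_cases hp0 : p = 0
    · exact ⟨0, by simp [hp0]⟩
    set m := p.natDegree with hm
    have hmn : m < n := lt_of_le_of_lt hpd hdn
    set q : Polynomial k := p - Polynomial.C p.leadingCoeff * Q m with hq
    have hmonQ := (hQ m).1
    have hdegQ := (hQ m).2
    have hlead : (Polynomial.C p.leadingCoeff * Q m).natDegree = m := by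
      rw [natDegree_C_mul (leadingCoeff_ne_zero.2 hp0), hdegQ]
    have hCQ : Polynomial.C p.leadingCoeff * Q m ≠ 0 :=
      mul_ne_zero (by simpa using leadingCoeff_ne_zero.2 hp0) hmonQ.ne_zero
    have hq_lt : q = 0 ∨ q.natDegree < m := by
      by_cases hq0 : q = 0
      · exact Or.inl hq0
      · right
        have hdeg_eq : p.degree = (Polynomial.C p.leadingCoeff * Q m).degree := by
          rw [degree_eq_natDegree hp0, degree_eq_natDegree hCQ, hlead]
        have hlc : p.leadingCoeff = (Polynomial.C p.leadingCoeff * Q m).leadingCoeff := by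
          rw [leadingCoeff_mul, leadingCoeff_C, hmonQ.leadingCoeff, mul_one]
        have hlt' : q.degree < p.degree := degree_sub_lt hdeg_eq hp0 hlc
        have := natDegree_lt_natDegree hq0 hlt'
        omega
    have hrepr_q : ∃ c : Fin n → k, q = ∑ i : Fin n, c i • Q (i : ℕ) := by
      rcases hq_lt with h | h
      · exact ⟨0, by simp [h]⟩
      · exact ih q.natDegree (by omega) (by omega) q le_rfl
    obtain ⟨c, hc⟩ := hrepr_q
    refine ⟨c + (Pi.single (⟨m, hmn⟩ : Fin n) p.leadingCoeff : Fin n → k), ?_⟩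
    have hsplit : ∑ i : Fin n, (c + (Pi.single (⟨m, hmn⟩ : Fin n) p.leadingCoeff : Fin n → k)) i • Q (i:ℕ)
        = (∑ i : Fin n, c i • Q (i:ℕ))
          + ∑ i : Fin n, (Pi.single (⟨m, hmn⟩ : Fin n) p.leadingCoeff : Fin n → k) i • Q (i:ℕ) := by
      rw [← Finset.sum_add_distrib]
      exact Finset.sum_congr rfl fun i _ => by rw [Pi.add_apply, add_smul]
    have hsingle_sum : ∑ i : Fin n, (Pi.single (⟨m, hmn⟩ : Fin n) p.leadingCoeff : Fin n → k) i • Q (i:ℕ)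
        = Polynomial.C p.leadingCoeff * Q m := by
      rw [Finset.sum_eq_single (⟨m, hmn⟩ : Fin n)]
      · simp [Polynomial.smul_eq_C_mul]
      · intro b _ hb
        rw [Pi.single_apply, if_neg (by exact fun h => hb h), zero_smul]
      · intro h; exact absurd (Finset.mem_univ _) h
    calc p = q + Polynomial.C p.leadingCoeff * Q m := by rw [hq]; ring
      _ = (∑ i : Fin n, c i • Q (i:ℕ))
          + ∑ i : Fin n, (Pi.single (⟨m, hmn⟩ : Fin n) p.leadingCoeff : Fin n → k) i • Q (i:ℕ) := by
        rw [hc, hsingle_sum]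
      _ = ∑ i : Fin n, (c + (Pi.single (⟨m, hmn⟩ : Fin n) p.leadingCoeff : Fin n → k)) i • Q (i:ℕ) :=
        hsplit.symm

theorem stmt_13 (k : Type*) [Field k] [CharP k 2] (Q : ℕ → Polynomial k)
    (h0 : Q 0 = 1) (h1 : Q 1 = Polynomial.X)
    (hrec : ∀ i, Q (i + 2) = Polynomial.X * Q (i + 1) + Q i)
    (n : ℕ) (J : Matrix (Fin n) (Fin n) k)
    (hJ : ∀ i j : Fin n, J i j = if (i : ℕ) + 1 = j ∨ (j : ℕ) + 1 = i then 1 else 0) :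
    J.charpoly = Q n ∧ minpoly k J = J.charpoly := by
  have hQmon := aux_monic k Q h0 h1 hrec
  have sum_mulVec : ∀ (F : Fin n → Matrix (Fin n) (Fin n) k) (w : Fin n → k),
      (∑ i : Fin n, F i) *ᵥ w = ∑ i : Fin n, F i *ᵥ w := by
    intro F w
    funext r
    simp only [Matrix.mulVec, dotProduct, Finset.sum_apply, Matrix.sum_apply,
      Finset.sum_mul]
    rw [Finset.sum_comm]
  -- key matrix-action lemmas
  have K0 : J *ᵥ auxE k n 0 = auxE k n 1 := by
    by_cases hn : 0 < n
    · funext r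
      rw [show auxE k n 0 = Pi.single (⟨0, hn⟩ : Fin n) 1 from dif_pos hn,
        Matrix.mulVec_single_one]
      simp only [Matrix.col_apply]
      rw [hJ, auxE_apply]
      simp only [Fin.val_mk]
      by_cases h : (r : ℕ) = 1
      · rw [if_pos (by omega), if_pos h]
      · rw [if_neg (by omega), if_neg h]
    · have hn0 : n = 0 := by omega
      subst hn0
      funext r; exact absurd r.2 (by omega)
  have K : ∀ i, i + 1 < n → J *ᵥ auxE k n (i+1) = auxE k n i + auxE k n (i+2) := by
    intro i hi
    funext r
    rw [show auxE k n (i+1) = Pi.single (⟨i+1, hi⟩ : Fin n) 1 from dif_pos hi,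
      Matrix.mulVec_single_one]
    simp only [Matrix.col_apply]
    rw [hJ, Pi.add_apply, auxE_apply, auxE_apply]
    simp only [Fin.val_mk]
    have hr := r.2
    by_cases hb : (r : ℕ) = i
    · rw [if_pos (by omega), if_pos hb, if_neg (by omega)]
      norm_num
    · by_cases hc2 : (r : ℕ) = i + 2
      · rw [if_pos (by omega), if_neg hb, if_pos hc2]
        norm_num
      · rw [if_neg (by omega), if_neg hb, if_neg hc2]
        norm_num
  -- the main vector computation
  have V : ∀ i, i ≤ n → (Polynomial.aeval J (Q i)) *ᵥ auxE k n 0 = auxE k n i := by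
    intro i
    induction i using Nat.strong_induction_on with
    | _ i ih =>
      match i with
      | 0 => intro _; rw [h0]; simp [Matrix.one_mulVec]
      | 1 => intro _; rw [h1]; simpa using K0
      | (m+2) =>
        intro hmn
        rw [hrec m, map_add, _root_.map_mul, Polynomial.aeval_X, Matrix.add_mulVec,
          ← Matrix.mulVec_mulVec, ih (m+1) (by omega) (by omega), ih m (by omega) (by omega),
          K m (by omega)]
        funext r
        simp only [Pi.add_apply]
        rw [add_comm (auxE k n m r), add_assoc, CharTwo.add_self_eq_zero, add_zero]
  -- Q n annihilates J
  have hQJ : Polynomial.aeval J (Q n) = 0 := by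
    ext r j
    have hj : (Polynomial.aeval J (Q n)) *ᵥ auxE k n (j : ℕ) = 0 := by
      rw [← V (j : ℕ) (le_of_lt j.2), Matrix.mulVec_mulVec, ← _root_.map_mul, mul_comm,
        _root_.map_mul, ← Matrix.mulVec_mulVec, V n le_rfl]
      have h0' : auxE k n n = 0 := dif_neg (lt_irrefl n)
      rw [h0', Matrix.mulVec_zero]
    have hsingle : auxE k n (j : ℕ) = Pi.single j 1 := by
      rw [show auxE k n (j : ℕ) = Pi.single (⟨(j : ℕ), j.2⟩ : Fin n) 1 from dif_pos j.2]
    rw [hsingle, Matrix.mulVec_single] at hj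
    have := congrFun hj r
    simpa using this
  -- minpoly basics
  have hint : IsIntegral k J := ⟨J.charpoly, J.charpoly_monic, by
    simpa [Polynomial.aeval_def] using J.aeval_self_charpoly⟩
  have hPmon : (minpoly k J).Monic := minpoly.monic hint
  have hPdvdQ : minpoly k J ∣ Q n := minpoly.dvd k J hQJ
  have hQnn : (Q n) ≠ 0 := (hQmon n).1.ne_zero
  -- minpoly has degree ≥ n
  have hPdeg_ge : n ≤ (minpoly k J).natDegree := by
    by_contra hlt
    push_neg at hlt
    obtain ⟨c, hc⟩ := aux_span k Q hQmon n (minpoly k J).natDegree hlt (minpoly k J) le_rfl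
    have haev : Polynomial.aeval J (minpoly k J) = 0 := minpoly.aeval k J
    have h1' : (0 : Fin n → k) = ∑ i : Fin n, c i • auxE k n (i : ℕ) := by
      have : (Polynomial.aeval J (minpoly k J)) *ᵥ auxE k n 0
          = ∑ i : Fin n, c i • auxE k n (i : ℕ) := by
        rw [hc, map_sum, sum_mulVec]
        refine Finset.sum_congr rfl fun i _ => ?_
        rw [_root_.map_smul, Matrix.smul_mulVec, V (i : ℕ) (le_of_lt i.2)]
      rw [haev, Matrix.zero_mulVec] at this
      exact this
    have hcs : ∀ j : Fin n, c j = 0 := by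
      intro j
      have h2 := congrFun h1' j
      rw [Finset.sum_apply] at h2
      have h3 : ∀ i : Fin n, (c i • auxE k n (i : ℕ)) j = if i = j then c j else 0 := by
        intro i
        rw [Pi.smul_apply, auxE_apply, smul_eq_mul]
        by_cases h : (j : ℕ) = (i : ℕ)
        · have hij : i = j := Fin.ext h.symm
          simp [hij]
        · have hij : i ≠ j := fun hh => h (by rw [hh])
          simp [h, hij]
      rw [Finset.sum_congr rfl (fun i _ => h3 i), Finset.sum_ite_eq'] at h2
      simpa using h2.symm
    have hP0 : minpoly k J = 0 := by
      rw [hc]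
      exact Finset.sum_eq_zero fun i _ => by rw [hcs i, zero_smul]
    exact hPmon.ne_zero hP0
  -- conclude
  have hQeqP : Q n = minpoly k J :=
    Polynomial.eq_of_monic_of_dvd_of_natDegree_le hPmon (hQmon n).1 hPdvdQ
      (by rw [(hQmon n).2]; omega)
  have hPdvdC : minpoly k J ∣ J.charpoly := minpoly.dvd k J (by
    simpa [Polynomial.aeval_def] using J.aeval_self_charpoly)
  have hCdeg : J.charpoly.natDegree = n := by
    rcases Nat.eq_zero_or_pos n with h | h
    · subst h
      have hc1 : J.charpoly = 1 := by
        unfold Matrix.charpoly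
        exact Matrix.det_isEmpty
      rw [hc1]; simp
    · rw [Matrix.charpoly_natDegree_eq_dim, Fintype.card_fin]
  have hCeqP : J.charpoly = minpoly k J :=
    Polynomial.eq_of_monic_of_dvd_of_natDegree_le hPmon J.charpoly_monic hPdvdC
      (by omega)
  exact ⟨by rw [hCeqP, ← hQeqP], by rw [hCeqP]⟩
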